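/- Optimal marking lemma (abstract): let C_eff, C_dRel, γ > 0 with γ ≥ 2C_dRel/C_eff, θ_*² = (C_eff − 2C_dRel/γ)/(2(1+C_dRel)) > 0, and μ(θ,γ) = (1/2)(1 − 2C_dRel/(γ C_eff))(1 − θ²/θ_*²) for θ ∈ (0, θ_*). Suppose nonnegative reals satisfy: ρ_*² ≤ μ ρ² (total error reduction), C_eff η² ≤ ρ² (efficiency), ρ² − 2ρ_*² ≤ 2C_dRel(η_R² + γ⁻¹η²) + 2η_R² (discrete reliability plus oscillation dominance, with η_R the estimator restricted to refined cells, η_R ≤ η). Then η_R² ≥ θ² η². -/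

import Mathlib

set_option maxHeartbeats 1000000 in
/-- Optimal marking lemma (abstract form): the refined-region estimator satisfies
the Dörfler property `η_R² ≥ θ² η²`. -/
theorem stmt_15 (Ceff CdRel γ θs θ μ ρ ρstar η ηR : ℝ)
    (hCeff : 0 < Ceff) (hCdRel : 0 < CdRel) (hγ : 0 < γ)
    (hγbig : 2 * CdRel / Ceff ≤ γ)
    (hθs : θs ^ 2 = (Ceff - 2 * CdRel / γ) / (2 * (1 + CdRel)))
    (hθspos : 0 < θs)
    (hθ : θ ∈ Set.Ioo (0 : ℝ) θs)
    (hμ : μ = (1 / 2) * (1 - 2 * CdRel / (γ * Ceff)) * (1 - θ ^ 2 / θs ^ 2))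
    (hρ : 0 ≤ ρ) (hρstar : 0 ≤ ρstar) (hη : 0 ≤ η) (hηR : 0 ≤ ηR)
    (hreduce : ρstar ^ 2 ≤ μ * ρ ^ 2)
    (heff : Ceff * η ^ 2 ≤ ρ ^ 2)
    (hdrel : ρ ^ 2 - 2 * ρstar ^ 2 ≤ 2 * CdRel * (ηR ^ 2 + γ⁻¹ * η ^ 2) + 2 * ηR ^ 2)
    (hRle : ηR ≤ η) :
    θ ^ 2 * η ^ 2 ≤ ηR ^ 2 := by
  obtain ⟨hθ0, hθlt⟩ := hθ
  have hγne : γ ≠ 0 := ne_of_gt hγ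
  have hCne : Ceff ≠ 0 := ne_of_gt hCeff
  have hθsne : θs ≠ 0 := ne_of_gt hθspos
  have hfac : 2 * CdRel / (γ * Ceff) ≤ 1 := by
    rw [div_le_one (by positivity)]
    calc 2 * CdRel = (2 * CdRel / Ceff) * Ceff := by field_simp
    _ ≤ γ * Ceff := by nlinarith
  have hA0 : 0 ≤ 1 - 2 * CdRel / (γ * Ceff) := by linarith
  have hA1 : 1 - 2 * CdRel / (γ * Ceff) ≤ 1 := by
    have : 0 ≤ 2 * CdRel / (γ * Ceff) := by positivity
    linarith
  have hθ2lt : θ ^ 2 < θs ^ 2 := by nlinarith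
  have hfac2 : 0 ≤ 1 - θ ^ 2 / θs ^ 2 := by
    rw [sub_nonneg, div_le_one (by positivity)]; exact le_of_lt hθ2lt
  have hB1 : 1 - θ ^ 2 / θs ^ 2 ≤ 1 := by
    have : 0 ≤ θ ^ 2 / θs ^ 2 := by positivity
    linarith
  have hμhalf : 2 * μ ≤ 1 := by
    rw [hμ]
    nlinarith [mul_le_mul_of_nonneg_left hB1 hA0]
  -- rewrite hθs as a polynomial identity
  have hθs' : Ceff - 2 * CdRel / γ = 2 * (1 + CdRel) * θs ^ 2 := by
    rw [hθs]; field_simp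
  -- key algebraic identity
  have hkey : (1 - 2 * μ) * Ceff - 2 * CdRel / γ = 2 * (1 + CdRel) * θ ^ 2 := by
    have step1 : (1 - 2 * μ) * Ceff - 2 * CdRel / γ
        = (θ ^ 2 / θs ^ 2) * (Ceff - 2 * CdRel / γ) := by
      rw [hμ]; field_simp; ring
    rw [step1, hθs']
    field_simp
  -- discrete reliability rewritten
  have h3 : 2 * CdRel * (ηR ^ 2 + γ⁻¹ * η ^ 2) + 2 * ηR ^ 2
      = 2 * (1 + CdRel) * ηR ^ 2 + (2 * CdRel / γ) * η ^ 2 := by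
    field_simp; ring
  rw [h3] at hdrel
  -- chain of inequalities
  have h1 : (1 - 2 * μ) * ρ ^ 2 ≤ ρ ^ 2 - 2 * ρstar ^ 2 := by linarith
  have h2 : (1 - 2 * μ) * (Ceff * η ^ 2) ≤ (1 - 2 * μ) * ρ ^ 2 :=
    mul_le_mul_of_nonneg_left heff (by linarith)
  have hchain : (1 - 2 * μ) * (Ceff * η ^ 2) ≤
      2 * (1 + CdRel) * ηR ^ 2 + (2 * CdRel / γ) * η ^ 2 := by linarith
  have h4 : 2 * (1 + CdRel) * θ ^ 2 * η ^ 2 ≤ 2 * (1 + CdRel) * ηR ^ 2 := by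
    have e : 2 * (1 + CdRel) * θ ^ 2 * η ^ 2
        = ((1 - 2 * μ) * Ceff - 2 * CdRel / γ) * η ^ 2 := by rw [hkey]
    rw [e]
    nlinarith [hchain]
  have h5 : (0:ℝ) < 2 * (1 + CdRel) := by linarith
  have h4' : 2 * (1 + CdRel) * (θ ^ 2 * η ^ 2) ≤ 2 * (1 + CdRel) * ηR ^ 2 := by
    linarith [h4]
  exact (mul_le_mul_iff_right₀ h5).mp h4'
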